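/- arXiv:2201.09551 — 3 statements merged into one kernel-verified Lean document; each statement's English description precedes it below -/
import Mathlib

section
/- In a topos, consider the kernel pair (p₁,p₂) : P ⇉ B of f : B → A, the pullback r : R → C of p₁ along an epimorphism g : C → B (with r₂ : R → P), and the further pullback giving the kernel pair (q₁,q₂) : Q ⇉ C of f∘g. Then the universal quantification of the mono ⟨q₁,q₂⟩ : Q ↪ C × C along g × g : C × C → B × B is the mono ⟨p₁,p₂⟩ : P ↪ B × B, i.e., ∀_{g×g}⟨q₁,q₂⟩ = ⟨p₁,p₂⟩ as subobjects of B × B. -/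
open CategoryTheory CategoryTheory.Limits

universe v u

lemma pb_obj_mk {C : Type u} [Category.{v} C] [HasPullbacks C] {X Y Z : C}
    (φ : X ⟶ Y) (m : Z ⟶ Y) [Mono m] :
    (Subobject.pullback φ).obj (Subobject.mk m) = Subobject.mk (pullback.snd m φ) := rfl

lemma isPullback_prodMap_fst {C : Type u} [Category.{v} C] [HasBinaryProducts C]
    {Y Z : C} (g : Y ⟶ Z) (X : C) :
    IsPullback (prod.map g (𝟙 X)) prod.fst prod.fst g := by
  refine IsPullback.of_isLimit' ⟨by simp⟩ ?_
  refine PullbackCone.IsLimit.mk _ (fun s => prod.lift s.snd (s.fst ≫ prod.snd))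
    (fun s => ?_) (fun s => by simp [prod.lift_fst, prod.lift_snd, prod.lift_fst_assoc, prod.lift_snd_assoc]) (fun s m hm1 hm2 => ?_)
  · apply Limits.prod.hom_ext <;> simp [s.condition, prod.lift_fst, prod.lift_snd, prod.lift_fst_assoc, prod.lift_snd_assoc]
  · apply Limits.prod.hom_ext
    · simpa [prod.lift_fst, prod.lift_snd, prod.lift_fst_assoc, prod.lift_snd_assoc] using hm2
    · have := hm1 =≫ prod.snd
      simpa [prod.lift_fst, prod.lift_snd, prod.lift_fst_assoc, prod.lift_snd_assoc] using this

lemma isPullback_prodMap_snd {C : Type u} [Category.{v} C] [HasBinaryProducts C]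
    {Y Z : C} (g : Y ⟶ Z) (X : C) :
    IsPullback (prod.map (𝟙 X) g) prod.snd prod.snd g := by
  refine IsPullback.of_isLimit' ⟨by simp⟩ ?_
  refine PullbackCone.IsLimit.mk _ (fun s => prod.lift (s.fst ≫ prod.fst) s.snd)
    (fun s => ?_) (fun s => by simp [prod.lift_fst, prod.lift_snd, prod.lift_fst_assoc, prod.lift_snd_assoc]) (fun s m hm1 hm2 => ?_)
  · apply Limits.prod.hom_ext <;> simp [s.condition, prod.lift_fst, prod.lift_snd, prod.lift_fst_assoc, prod.lift_snd_assoc]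
  · apply Limits.prod.hom_ext
    · have := hm1 =≫ prod.fst
      simpa [prod.lift_fst, prod.lift_snd, prod.lift_fst_assoc, prod.lift_snd_assoc] using this
    · simpa [prod.lift_fst, prod.lift_snd, prod.lift_fst_assoc, prod.lift_snd_assoc] using hm2

/-- in a topos (a finitely complete category with pullback-stable
epimorphisms, with `∀` the right adjoint of pullback of subobjects), if
`(p₁,p₂)` is the kernel pair of `f : B ⟶ A`, `g : C ⟶ B` is epi, and `(q₁,q₂)` is
the kernel pair of `g ≫ f`, then `∀_{g×g}⟨q₁,q₂⟩ = ⟨p₁,p₂⟩` as subobjects of `B × B`. -/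
theorem stmt13 {C : Type u} [Category.{v} C] [HasFiniteLimits C]
    (hstab : ∀ {P X Y Z : C} (fst : P ⟶ X) (snd : P ⟶ Y) (f : X ⟶ Z) (g : Y ⟶ Z),
      IsPullback fst snd f g → Epi g → Epi fst)
    {A B Cc : C} (f : B ⟶ A) (g : Cc ⟶ B) [Epi g]
    [Mono (prod.lift (pullback.fst f f) (pullback.snd f f))]
    [Mono (prod.lift (pullback.fst (g ≫ f) (g ≫ f)) (pullback.snd (g ≫ f) (g ≫ f)))]
    (uQ : Subobject (Cc ⨯ Cc) → Subobject (B ⨯ B))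
    (huQ : ∀ (u : Subobject (B ⨯ B)) (v : Subobject (Cc ⨯ Cc)),
      (Subobject.pullback (prod.map g g)).obj u ≤ v ↔ u ≤ uQ v) :
    uQ (Subobject.mk
        (prod.lift (pullback.fst (g ≫ f) (g ≫ f)) (pullback.snd (g ≫ f) (g ≫ f)))) =
      Subobject.mk (prod.lift (pullback.fst f f) (pullback.snd f f)) := by
  set pP := prod.lift (pullback.fst f f) (pullback.snd f f) with hpP
  set pQ := prod.lift (pullback.fst (g ≫ f) (g ≫ f)) (pullback.snd (g ≫ f) (g ≫ f)) with hpQ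
  have egg : Epi (prod.map g g) := by
    have e1 : Epi (prod.map g (𝟙 B)) :=
      hstab _ _ _ _ (isPullback_prodMap_fst g B) ‹Epi g›
    have e2 : Epi (prod.map (𝟙 Cc) g) :=
      hstab _ _ _ _ (isPullback_prodMap_snd g Cc) ‹Epi g›
    have : prod.map (𝟙 Cc) g ≫ prod.map g (𝟙 B) = prod.map g g := by
      apply Limits.prod.hom_ext <;> simp
    rw [← this]
    exact epi_comp _ _
  apply le_antisymm
  · -- uQ (mk pQ) ≤ mk pP
    have hle : (Subobject.pullback (prod.map g g)).obj (uQ (Subobject.mk pQ)) ≤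
        Subobject.mk pQ := (huQ _ _).2 le_rfl
    set u := uQ (Subobject.mk pQ)
    rw [← Subobject.mk_arrow u, pb_obj_mk] at hle
    have hw := Subobject.ofMkLEMk_comp hle
    set w := Subobject.ofMkLEMk _ _ hle
    set a := pullback.fst u.arrow (prod.map g g) with ha
    set b := pullback.snd u.arrow (prod.map g g) with hb
    have he : Epi a :=
      hstab _ _ _ _ (IsPullback.of_hasPullback u.arrow (prod.map g g)) egg
    have hq : pullback.fst (g ≫ f) (g ≫ f) ≫ g ≫ f =
        pullback.snd (g ≫ f) (g ≫ f) ≫ g ≫ f := pullback.condition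
    have hA : a ≫ u.arrow = w ≫ prod.lift (pullback.fst (g ≫ f) (g ≫ f) ≫ g)
        (pullback.snd (g ≫ f) (g ≫ f) ≫ g) := by
      rw [pullback.condition, ← hb, ← hw, Category.assoc]
      congr 1
      apply Limits.prod.hom_ext <;> simp [hpQ]
    have key : u.arrow ≫ prod.fst ≫ f = u.arrow ≫ prod.snd ≫ f := by
      apply (cancel_epi a).1
      calc a ≫ u.arrow ≫ prod.fst ≫ f
          = (a ≫ u.arrow) ≫ prod.fst ≫ f := by simp
        _ = w ≫ pullback.fst (g ≫ f) (g ≫ f) ≫ g ≫ f := by rw [hA]; simp [prod.lift_fst, prod.lift_snd, prod.lift_fst_assoc, prod.lift_snd_assoc]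
        _ = w ≫ pullback.snd (g ≫ f) (g ≫ f) ≫ g ≫ f := by rw [hq]
        _ = (a ≫ u.arrow) ≫ prod.snd ≫ f := by rw [hA]; simp [prod.lift_fst, prod.lift_snd, prod.lift_fst_assoc, prod.lift_snd_assoc]
        _ = a ≫ u.arrow ≫ prod.snd ≫ f := by simp
    have hfac : pullback.lift (u.arrow ≫ prod.fst) (u.arrow ≫ prod.snd)
        (by simpa using key) ≫ pP = u.arrow := by
      rw [hpP]; apply Limits.prod.hom_ext <;> simp [prod.lift_fst, prod.lift_snd, prod.lift_fst_assoc, prod.lift_snd_assoc, pullback.lift_fst, pullback.lift_snd]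
    exact Subobject.le_mk_of_comm _ hfac
  · -- mk pP ≤ uQ (mk pQ)
    rw [← huQ, pb_obj_mk]
    have hc : pullback.fst pP (prod.map g g) ≫ pP =
        pullback.snd pP (prod.map g g) ≫ prod.map g g := pullback.condition
    have hcfst : pullback.fst pP (prod.map g g) ≫ pullback.fst f f =
        pullback.snd pP (prod.map g g) ≫ prod.fst ≫ g := by
      have := hc =≫ prod.fst
      simpa [hpP, prod.lift_fst, prod.lift_snd, prod.lift_fst_assoc, prod.lift_snd_assoc] using this
    have hcsnd : pullback.fst pP (prod.map g g) ≫ pullback.snd f f =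
        pullback.snd pP (prod.map g g) ≫ prod.snd ≫ g := by
      have := hc =≫ prod.snd
      simpa [hpP, prod.lift_fst, prod.lift_snd, prod.lift_fst_assoc, prod.lift_snd_assoc] using this
    have hcond : (pullback.snd pP (prod.map g g) ≫ prod.fst) ≫ g ≫ f =
        (pullback.snd pP (prod.map g g) ≫ prod.snd) ≫ g ≫ f := by
      have hq : pullback.fst f f ≫ f = pullback.snd f f ≫ f := pullback.condition
      calc (pullback.snd pP (prod.map g g) ≫ prod.fst) ≫ g ≫ f
          = (pullback.fst pP (prod.map g g) ≫ pullback.fst f f) ≫ f := by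
            rw [hcfst]; simp
        _ = (pullback.fst pP (prod.map g g) ≫ pullback.snd f f) ≫ f := by
            rw [Category.assoc, hq, Category.assoc]
        _ = (pullback.snd pP (prod.map g g) ≫ prod.snd) ≫ g ≫ f := by
            rw [hcsnd]; simp
    refine Subobject.mk_le_mk_of_comm
      (pullback.lift (pullback.snd pP (prod.map g g) ≫ prod.fst)
        (pullback.snd pP (prod.map g g) ≫ prod.snd) hcond) ?_
    apply Limits.prod.hom_ext <;> simp [hpQ, prod.lift_fst, prod.lift_snd, prod.lift_fst_assoc, prod.lift_snd_assoc, pullback.lift_fst, pullback.lift_snd] <;> rfl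
end

section
/- In a topos, if a subobject ⟨x,y⟩ : S ↪ B × B satisfies (g×g)*⟨x,y⟩ ≤ ⟨q₁,q₂⟩ where g : C → B is an epimorphism and (q₁,q₂) is the kernel pair of f∘g, then f∘x = f∘y, i.e., ⟨x,y⟩ factors through the kernel pair of f. -/
open CategoryTheory CategoryTheory.Limits

universe v u

lemma aux_pb_left {C : Type u} [Category.{v} C] [HasFiniteLimits C] {X X' Y : C} (g : X ⟶ X') :
    IsPullback (prod.map g (𝟙 Y)) prod.fst (prod.fst : X' ⨯ Y ⟶ X') g := by
  refine IsPullback.of_isLimit (PullbackCone.IsLimit.mk (prod.map_fst g (𝟙 Y))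
    (fun s => prod.lift (s.snd) (s.fst ≫ prod.snd)) ?_ ?_ ?_)
  · intro s; apply Limits.prod.hom_ext <;> simp [s.condition, prod.lift_fst, prod.lift_snd]
  · intro s; simp [prod.lift_fst, prod.lift_snd]
  · intro s m h1 h2
    apply Limits.prod.hom_ext
    · simpa [prod.lift_fst, prod.lift_snd] using h2
    · simpa [prod.lift_fst, prod.lift_snd] using h1 =≫ prod.snd

lemma aux_pb_right {C : Type u} [Category.{v} C] [HasFiniteLimits C] {X X' Y : C} (g : X ⟶ X') :
    IsPullback (prod.map (𝟙 Y) g) prod.snd (prod.snd : Y ⨯ X' ⟶ X') g := by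
  refine IsPullback.of_isLimit (PullbackCone.IsLimit.mk (prod.map_snd (𝟙 Y) g)
    (fun s => prod.lift (s.fst ≫ prod.fst) s.snd) ?_ ?_ ?_)
  · intro s; apply Limits.prod.hom_ext <;> simp [s.condition, prod.lift_fst, prod.lift_snd]
  · intro s; simp [prod.lift_fst, prod.lift_snd]
  · intro s m h1 h2
    apply Limits.prod.hom_ext
    · simpa [prod.lift_fst, prod.lift_snd] using h1 =≫ prod.fst
    · simpa [prod.lift_fst, prod.lift_snd] using h2

/-- in a topos (finitely complete, epis stable under pullback), if a
subobject `⟨x,y⟩ : S ↪ B × B` satisfies `(g×g)*⟨x,y⟩ ≤ ⟨q₁,q₂⟩`, where `g : C ⟶ B`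
is epi and `(q₁,q₂)` is the kernel pair of `g ≫ f`, then `x ≫ f = y ≫ f`. -/
theorem stmt14 {C : Type u} [Category.{v} C] [HasFiniteLimits C]
    (hstab : ∀ {P X Y Z : C} (fst : P ⟶ X) (snd : P ⟶ Y) (f : X ⟶ Z) (g : Y ⟶ Z),
      IsPullback fst snd f g → Epi g → Epi fst)
    {A B Cc : C} (f : B ⟶ A) (g : Cc ⟶ B) [Epi g]
    [Mono (prod.lift (pullback.fst (g ≫ f) (g ≫ f)) (pullback.snd (g ≫ f) (g ≫ f)))]
    {S : C} (x y : S ⟶ B) [Mono (prod.lift x y)]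
    (h : (Subobject.pullback (prod.map g g)).obj (Subobject.mk (prod.lift x y)) ≤
      Subobject.mk
        (prod.lift (pullback.fst (g ≫ f) (g ≫ f)) (pullback.snd (g ≫ f) (g ≫ f)))) :
    x ≫ f = y ≫ f := by
  set m : S ⟶ B ⨯ B := prod.lift x y with hm
  set φ : Cc ⨯ Cc ⟶ B ⨯ B := prod.map g g with hφ
  set q : pullback (g ≫ f) (g ≫ f) ⟶ Cc ⨯ Cc :=
    prod.lift (pullback.fst (g ≫ f) (g ≫ f)) (pullback.snd (g ≫ f) (g ≫ f)) with hq
  -- identify the pullback subobject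
  have key : (Subobject.pullback φ).obj (Subobject.mk m) =
      Subobject.mk (pullback.snd m φ) := by
    symm
    apply Quotient.sound'
    exact ⟨MonoOver.mkArrowIso ((MonoOver.pullback φ).obj (MonoOver.mk m))⟩
  rw [key] at h
  -- factorization through the kernel pair
  let k := Subobject.ofMkLEMk _ _ h
  have hk : k ≫ q = pullback.snd m φ := Subobject.ofMkLEMk_comp h
  -- prod.map g g is epi
  have e1 : Epi (prod.map g (𝟙 Cc)) := hstab _ _ _ _ (aux_pb_left g) inferInstance
  have e2 : Epi (prod.map (𝟙 B) g) := hstab _ _ _ _ (aux_pb_right g) inferInstance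
  have eφ : Epi φ := by
    have : φ = prod.map g (𝟙 Cc) ≫ prod.map (𝟙 B) g := by
      apply Limits.prod.hom_ext <;> simp [hφ]
    rw [this]; exact epi_comp _ _
  -- pullback.fst m φ is epi
  have efst : Epi (pullback.fst m φ) :=
    hstab _ _ _ _ (IsPullback.of_hasPullback m φ) eφ
  -- key equation
  have h1 : pullback.snd m φ ≫ prod.fst ≫ g ≫ f =
      pullback.snd m φ ≫ prod.snd ≫ g ≫ f := by
    rw [← hk]
    simp only [Category.assoc, hq, prod.lift_fst_assoc, prod.lift_snd_assoc]
    rw [pullback.condition]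
  have hx : pullback.fst m φ ≫ x = pullback.snd m φ ≫ prod.fst ≫ g := by
    have := pullback.condition (f := m) (g := φ) =≫ prod.fst
    simpa [hm, hφ, prod.lift_fst, prod.lift_snd] using this
  have hy : pullback.fst m φ ≫ y = pullback.snd m φ ≫ prod.snd ≫ g := by
    have := pullback.condition (f := m) (g := φ) =≫ prod.snd
    simpa [hm, hφ, prod.lift_fst, prod.lift_snd] using this
  rw [← cancel_epi (pullback.fst m φ)]
  calc pullback.fst m φ ≫ x ≫ f = (pullback.fst m φ ≫ x) ≫ f := by rw [Category.assoc]
    _ = (pullback.snd m φ ≫ prod.fst ≫ g) ≫ f := by rw [hx]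
    _ = pullback.snd m φ ≫ prod.fst ≫ g ≫ f := by simp [Category.assoc]
    _ = pullback.snd m φ ≫ prod.snd ≫ g ≫ f := h1
    _ = (pullback.snd m φ ≫ prod.snd ≫ g) ≫ f := by simp [Category.assoc]
    _ = (pullback.fst m φ ≫ y) ≫ f := by rw [hy]
    _ = pullback.fst m φ ≫ y ≫ f := by rw [Category.assoc]
end

section
/- For every topos T, the category Span_E(T) of spans modulo the relation generated by epimorphisms (equivalently, Rel(T)) is a division allegory: for each morphism φ : A → B and each object C, the order-preserving precomposition map (−)∘φ : Hom(B,C) → Hom(A,C) has a right adjoint (−)/φ, given on a relation [h,k] by [π₁∘a, π₂∘a] where a = ∀_{g×1}(f×1)*(m_{⟨h,k⟩}) and m_{⟨h,k⟩} is the mono part of ⟨h,k⟩ and φ = [f,g]. -/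
open CategoryTheory CategoryTheory.Limits

universe v u

variable {C : Type u} [Category.{v} C] [HasFiniteLimits C] [HasImages C]

/-- Composition of relations (subobjects of products) by pullback and image. -/
noncomputable def relComp {X Y Z : C}
    (R : Subobject (X ⨯ Y)) (S : Subobject (Y ⨯ Z)) : Subobject (X ⨯ Z) :=
  Subobject.mk (image.ι (prod.lift
    (pullback.fst (R.arrow ≫ prod.snd) (S.arrow ≫ prod.fst) ≫ R.arrow ≫ prod.fst)
    (pullback.snd (R.arrow ≫ prod.snd) (S.arrow ≫ prod.fst) ≫ S.arrow ≫ prod.snd)))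

/-- The identity relation: the diagonal subobject. -/
noncomputable def idRelSub (X : C) : Subobject (X ⨯ X) := Subobject.mk (diag X)

section Aux

variable {D : Type u} [Category.{v} D]

lemma aux_mk_image_le_iff [HasFiniteLimits D] [HasImages D] {X Y : D} (u : X ⟶ Y)
    (χ : Subobject Y) : Subobject.mk (image.ι u) ≤ χ ↔ χ.Factors u := by
  constructor
  · intro h
    have h1 := Subobject.factors_of_le _ h (Subobject.mk_factors_self (image.ι u))
    have h2 := Subobject.factors_of_factors_right (factorThruImage u) h1
    rwa [image.fac] at h2
  · intro h
    exact Subobject.mk_le_of_comm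
      (image.lift ⟨_, χ.arrow, χ.factorThru u h, χ.factorThru_arrow u h⟩)
      (image.lift_fac _)

lemma aux_mk_le_mk_iff {X A₁ A₂ : D} (m : A₁ ⟶ X) (n : A₂ ⟶ X) [Mono m] [Mono n] :
    Subobject.mk m ≤ Subobject.mk n ↔ ∃ k : A₁ ⟶ A₂, k ≫ n = m := by
  constructor
  · intro h
    have := (Subobject.mk_factors_iff n m).mp
      (Subobject.factors_of_le m h (Subobject.mk_factors_self m))
    exact this
  · rintro ⟨k, hk⟩
    exact Subobject.mk_le_mk_of_comm k hk

lemma aux_factors_iff {W Y : D} (χ : Subobject Y) (v : W ⟶ Y) :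
    χ.Factors v ↔ ∃ t : W ⟶ (χ : D), t ≫ χ.arrow = v := by
  constructor
  · intro h
    exact ⟨χ.factorThru v h, χ.factorThru_arrow v h⟩
  · rintro ⟨t, ht⟩
    rw [← ht]
    exact Subobject.factors_comp_arrow t

end Aux

/-- for every topos `T`, `Span_E(T) ≅ Rel(T)` is a division allegory:
for `φ : A → B` (a relation, i.e. a subobject of `A × B`) and any object `C`,
precomposition `(−)∘φ` has a right adjoint `(−)/φ` given by
`χ ↦ ∀_{g×1}((f×1)*(χ))` where `f = φ.arrow ≫ π₁`, `g = φ.arrow ≫ π₂`. -/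
theorem stmt16 {C : Type u} [Category.{v} C] [HasFiniteLimits C] [HasImages C]
    (hreg : ∀ {X Y : C} (f : X ⟶ Y), Nonempty (RegularEpi (factorThruImage f)))
    (hstab : ∀ {P X Y Z : C} (fst : P ⟶ X) (snd : P ⟶ Y) (f : X ⟶ Z) (g : Y ⟶ Z),
      IsPullback fst snd f g → Nonempty (RegularEpi g) → Nonempty (RegularEpi fst))
    (uA : ∀ {X Y : C} (h : X ⟶ Y), Subobject X → Subobject Y)
    (huA : ∀ {X Y : C} (h : X ⟶ Y) (u : Subobject Y) (v : Subobject X),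
      (Subobject.pullback h).obj u ≤ v ↔ u ≤ uA h v)
    {A B Cc : C} (φ : Subobject (A ⨯ B)) (ψ : Subobject (B ⨯ Cc))
    (χ : Subobject (A ⨯ Cc)) :
    relComp φ ψ ≤ χ ↔
      ψ ≤ uA (prod.map (φ.arrow ≫ prod.snd) (𝟙 Cc))
        ((Subobject.pullback (prod.map (φ.arrow ≫ prod.fst) (𝟙 Cc))).obj χ) := by
  rw [← huA]
  set f1 := prod.map (φ.arrow ≫ prod.fst) (𝟙 Cc) with hf1
  set g1 := prod.map (φ.arrow ≫ prod.snd) (𝟙 Cc) with hg1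
  set p₁ := pullback.fst (φ.arrow ≫ prod.snd) (ψ.arrow ≫ prod.fst) with hp₁
  set p₂ := pullback.snd (φ.arrow ≫ prod.snd) (ψ.arrow ≫ prod.fst) with hp₂
  set u : pullback (φ.arrow ≫ prod.snd) (ψ.arrow ≫ prod.fst) ⟶ A ⨯ Cc :=
    prod.lift (p₁ ≫ φ.arrow ≫ prod.fst) (p₂ ≫ ψ.arrow ≫ prod.snd) with hu
  have hL : relComp φ ψ ≤ χ ↔ χ.Factors u := by
    rw [relComp]
    exact aux_mk_image_le_iff u χ
  have eψ : (Subobject.pullback g1).obj ψ = Subobject.mk (pullback.snd ψ.arrow g1) := by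
    conv_lhs => rw [← Subobject.mk_arrow ψ]
    rfl
  have eχ : (Subobject.pullback f1).obj χ = Subobject.mk (pullback.snd χ.arrow f1) := by
    conv_lhs => rw [← Subobject.mk_arrow χ]
    rfl
  rw [hL, eψ, eχ, aux_mk_le_mk_iff]
  set q := pullback.snd ψ.arrow g1 with hq
  set s := pullback.fst ψ.arrow g1 with hs
  have hcond : s ≫ ψ.arrow = q ≫ g1 := pullback.condition
  constructor
  · intro h
    obtain ⟨t, ht⟩ := (aux_factors_iff χ u).mp h
    -- β : pullback ψ.arrow g1 ⟶ P
    have hβc : (q ≫ prod.fst) ≫ φ.arrow ≫ prod.snd = s ≫ ψ.arrow ≫ prod.fst :=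
      calc (q ≫ prod.fst) ≫ φ.arrow ≫ prod.snd = (q ≫ g1) ≫ prod.fst := by simp [hg1]
        _ = (s ≫ ψ.arrow) ≫ prod.fst := by rw [hcond]
        _ = s ≫ ψ.arrow ≫ prod.fst := by simp
    set β := pullback.lift (q ≫ prod.fst) s hβc with hβ
    have hβu : β ≫ u = q ≫ f1 := by
      apply Limits.prod.hom_ext
      · simp [hβ, hu, hf1, hp₁]
        erw [prod.lift_fst, pullback.lift_fst_assoc, Category.assoc]
      · have h2 : s ≫ ψ.arrow ≫ prod.snd = q ≫ prod.snd := by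
          rw [← Category.assoc, hcond]; simp [hg1]
        simp [hβ, hu, hf1, hp₂, h2]
        erw [prod.lift_snd, pullback.lift_snd_assoc, h2]
    have hk : ((β ≫ t) ≫ χ.arrow) = q ≫ f1 := by
      rw [Category.assoc, ht, hβu]
    exact ⟨pullback.lift (β ≫ t) q hk, pullback.lift_snd _ _ _⟩
  · rintro ⟨k, hk⟩
    -- α : P ⟶ pullback ψ.arrow g1
    have hPcond : p₁ ≫ φ.arrow ≫ prod.snd = p₂ ≫ ψ.arrow ≫ prod.fst := by
      simpa [hp₁, hp₂] using
        pullback.condition (f := φ.arrow ≫ prod.snd) (g := ψ.arrow ≫ prod.fst)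
    have hαc : p₂ ≫ ψ.arrow = prod.lift p₁ (p₂ ≫ ψ.arrow ≫ prod.snd) ≫ g1 := by
      apply Limits.prod.hom_ext
      · simp [hg1, ← hPcond]
        erw [prod.lift_fst]
      · simp [hg1]
        erw [prod.lift_snd]
    set α := pullback.lift p₂ (prod.lift p₁ (p₂ ≫ ψ.arrow ≫ prod.snd)) hαc with hα
    have hαq : α ≫ q = prod.lift p₁ (p₂ ≫ ψ.arrow ≫ prod.snd) := pullback.lift_snd _ _ _
    have hαu : (α ≫ q) ≫ f1 = u := by
      rw [hαq]
      apply Limits.prod.hom_ext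
      · simp [hu, hf1]
      · simp [hu, hf1]
    refine (aux_factors_iff χ u).mpr ⟨α ≫ k ≫ pullback.fst χ.arrow f1, ?_⟩
    calc (α ≫ k ≫ pullback.fst χ.arrow f1) ≫ χ.arrow
        = (α ≫ k) ≫ pullback.fst χ.arrow f1 ≫ χ.arrow := by simp
      _ = (α ≫ k) ≫ pullback.snd χ.arrow f1 ≫ f1 := by rw [pullback.condition]
      _ = (α ≫ (k ≫ pullback.snd χ.arrow f1)) ≫ f1 := by simp
      _ = (α ≫ q) ≫ f1 := by rw [hk]
      _ = u := hαu
end
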